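/- Degeneration T_03 → T_09: let μ be the commutative bilinear product on ℂ³ with u₁∘u₁ = u₁, u₂∘u₂ = u₂, u₁∘u₃ = u₃ and all other products of basis vectors zero, and let λ be the commutative bilinear product with u₁∘u₁ = u₁, u₁∘u₂ = u₂ and all other products of basis vectors zero. Then λ lies in the closure of the orbit {g·μ : g ∈ GL(3,ℂ)} in the space of bilinear maps ℂ³ × ℂ³ → ℂ³ with its standard topology. -/

import Mathlib

open Matrix

/-- The bilinear product on `ℂ³` determined by structure constants `c`:
`(x ∘ y) k = ∑ i j, x i * y j * c i j k`. -/
noncomputable def bilOf (c : Fin 3 → Fin 3 → Fin 3 → ℂ) (x y : Fin 3 → ℂ) : Fin 3 → ℂ :=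
  fun k => ∑ i, ∑ j, x i * y j * c i j k

/-- The action of `g ∈ GL(3,ℂ)` on structure constants, corresponding to the
action `(g·μ)(x,y) = g(μ(g⁻¹x, g⁻¹y))` on bilinear maps: `(act g c) i j` is the
coordinate vector of `(g·μ)(uᵢ, uⱼ)` in the standard basis `u₁, u₂, u₃`. -/
noncomputable def act (g : GL (Fin 3) ℂ) (c : Fin 3 → Fin 3 → Fin 3 → ℂ) :
    Fin 3 → Fin 3 → Fin 3 → ℂ :=
  fun i j => (g : Matrix (Fin 3) (Fin 3) ℂ).mulVec
    (bilOf c (((g⁻¹ : GL (Fin 3) ℂ) : Matrix (Fin 3) (Fin 3) ℂ).mulVec (Pi.single i 1))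
             (((g⁻¹ : GL (Fin 3) ℂ) : Matrix (Fin 3) (Fin 3) ℂ).mulVec (Pi.single j 1)))

noncomputable def Amat (t : ℂ) : Matrix (Fin 3) (Fin 3) ℂ :=
  ![![1,0,0],![0,0,t],![0,t,0]]
lemma Amat_mul (t s : ℂ) (h : t * s = 1) : Amat t * Amat s = 1 := by
  ext i j
  fin_cases i <;> fin_cases j <;>
    simp only [Matrix.mul_apply] <;>
    simp [Amat, Matrix.mul_apply, Fin.sum_univ_three, Matrix.one_apply, Matrix.vecHead, Matrix.vecTail, h]
noncomputable def gmat (t : ℂ) (ht : t ≠ 0) : GL (Fin 3) ℂ :=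
  ⟨Amat t⁻¹, Amat t, Amat_mul _ _ (inv_mul_cancel₀ ht), Amat_mul _ _ (mul_inv_cancel₀ ht)⟩
noncomputable def μc : Fin 3 → Fin 3 → Fin 3 → ℂ :=
  ![![![(1:ℂ),0,0],![(0:ℂ),0,0],![(0:ℂ),0,1]],![![(0:ℂ),0,0],![(0:ℂ),1,0],![(0:ℂ),0,0]],![![(0:ℂ),0,1],![(0:ℂ),0,0],![(0:ℂ),0,0]]]
noncomputable def lamc : Fin 3 → Fin 3 → Fin 3 → ℂ :=
  ![![![(1:ℂ),0,0],![(0:ℂ),1,0],![(0:ℂ),0,0]],![![(0:ℂ),1,0],![(0:ℂ),0,0],![(0:ℂ),0,0]],![![(0:ℂ),0,0],![(0:ℂ),0,0],![(0:ℂ),0,0]]]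
noncomputable def Dc : Fin 3 → Fin 3 → Fin 3 → ℂ :=
  fun i j k => if i = 2 ∧ j = 2 ∧ k = 2 then 1 else 0
lemma act_gmat (t : ℂ) (ht : t ≠ 0) : act (gmat t ht) μc = lamc + t • Dc := by
  funext i j k
  have hinv : ((gmat t ht)⁻¹ : GL (Fin 3) ℂ) = (⟨Amat t, Amat t⁻¹,
      Amat_mul _ _ (mul_inv_cancel₀ ht), Amat_mul _ _ (inv_mul_cancel₀ ht)⟩ : GL (Fin 3) ℂ) := rfl
  simp only [act, hinv]
  fin_cases i <;> fin_cases j <;> fin_cases k <;>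
    simp [act, hinv, gmat, bilOf, μc, lamc, Dc, Amat, Matrix.mulVec, dotProduct,
      Fin.sum_univ_three, Pi.single_apply, Matrix.vecHead, Matrix.vecTail] <;>
    field_simp

/-- Degeneration T_03 → T_09: here μ is u₁∘u₁ = u₁, u₂∘u₂ = u₂, u₁∘u₃ = u₃ and λ is u₁∘u₁ = u₁, u₁∘u₂ = u₂; λ lies in the closure of the GL(3,ℂ)-orbit of μ. -/
theorem degeneration_T03_T09 :
    (![![![(1:ℂ),0,0],![(0:ℂ),1,0],![(0:ℂ),0,0]],![![(0:ℂ),1,0],![(0:ℂ),0,0],![(0:ℂ),0,0]],![![(0:ℂ),0,0],![(0:ℂ),0,0],![(0:ℂ),0,0]]] : Fin 3 → Fin 3 → Fin 3 → ℂ)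
      ∈ closure {c : Fin 3 → Fin 3 → Fin 3 → ℂ |
          ∃ g : GL (Fin 3) ℂ, c = act g (![![![(1:ℂ),0,0],![(0:ℂ),0,0],![(0:ℂ),0,1]],![![(0:ℂ),0,0],![(0:ℂ),1,0],![(0:ℂ),0,0]],![![(0:ℂ),0,1],![(0:ℂ),0,0],![(0:ℂ),0,0]]] : Fin 3 → Fin 3 → Fin 3 → ℂ)} := by
  have key : ∀ n : ℕ, (lamc + ((n:ℂ)+1)⁻¹ • Dc) ∈
      {c : Fin 3 → Fin 3 → Fin 3 → ℂ | ∃ g : GL (Fin 3) ℂ, c = act g μc} := by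
    intro n
    have ht : ((n:ℂ)+1)⁻¹ ≠ 0 := by
      simp [Nat.cast_add_one_ne_zero]
    exact ⟨gmat _ ht, (act_gmat _ ht).symm⟩
  have htend : Filter.Tendsto (fun n : ℕ => lamc + ((n:ℂ)+1)⁻¹ • Dc)
      Filter.atTop (nhds lamc) := by
    have h1 : Filter.Tendsto (fun n : ℕ => ((n:ℂ)+1)⁻¹) Filter.atTop (nhds 0) := by
      have h0 : Filter.Tendsto (fun n : ℕ => ((1/((n:ℝ)+1) : ℝ) : ℂ)) Filter.atTop (nhds ((0:ℝ):ℂ)) :=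
        (Complex.continuous_ofReal.tendsto _).comp tendsto_one_div_add_atTop_nhds_zero_nat
      simpa [one_div] using h0
    have h2 : Filter.Tendsto (fun n : ℕ => ((n:ℂ)+1)⁻¹ • Dc) Filter.atTop
        (nhds ((0:ℂ) • Dc)) := h1.smul_const Dc
    simpa using (tendsto_const_nhds.add h2)
  have h := mem_closure_of_tendsto htend (Filter.Eventually.of_forall key)
  exact h
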